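/- If a is a nonincreasing nonnegative integer list, a' is a graphic list (i.e., it is the degree sequence of some simple graph), and a ≺ a', then a is also graphic. -/

import Mathlib

open Finset

/-- Partial sum of the first `k` entries of `a`. -/
def partSum {n : ℕ} (a : Fin n → ℕ) (k : ℕ) : ℕ :=
  ∑ i : Fin n, if (i : ℕ) < k then a i else 0

/-- `a ≺ a'` : `a` is majorized by `a'`. -/
def Majorized {n : ℕ} (a a' : Fin n → ℕ) : Prop :=
  (∀ k : ℕ, partSum a k ≤ partSum a' k) ∧ ∑ i, a i = ∑ i, a' i

/-- `a` is nonincreasing. -/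
def Nonincreasing {n : ℕ} (a : Fin n → ℕ) : Prop :=
  ∀ i j : Fin n, i ≤ j → a j ≤ a i

/-- `b` is nondecreasing. -/
def Nondecreasing {n : ℕ} (b : Fin n → ℕ) : Prop :=
  ∀ i j : Fin n, i ≤ j → b i ≤ b j

/-- `a` is obtained from `a'` by a unit `(i,j)`-transfer. -/
def UnitTransfer {n : ℕ} (a' a : Fin n → ℕ) (i j : Fin n) : Prop :=
  i < j ∧ a' j + 2 ≤ a' i ∧
  a = Function.update (Function.update a' i (a' i - 1)) j (a' j + 1)

/-- Row sum of a 0-1 matrix. -/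
def rowSum {n : ℕ} (M : Fin n → Fin n → Bool) (i : Fin n) : ℕ :=
  ∑ j, if M i j then 1 else 0

/-- Column sum of a 0-1 matrix. -/
def colSum {n : ℕ} (M : Fin n → Fin n → Bool) (j : Fin n) : ℕ :=
  ∑ i, if M i j then 1 else 0

/-- Number of loop-digraph realizations of `(a,b)`:
`n×n` 0-1 matrices with row sums `b` and column sums `a`. -/
noncomputable def N1 {n : ℕ} (a b : Fin n → ℕ) : ℕ :=
  Nat.card {M : Fin n → Fin n → Bool //
    (∀ i, rowSum M i = b i) ∧ (∀ j, colSum M j = a j)}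

def LoopDigraphic {n : ℕ} (a b : Fin n → ℕ) : Prop := 0 < N1 a b

/-- Number of digraph realizations of `(a,b)`:
`n×n` 0-1 matrices with zero diagonal, row sums `b` and column sums `a`. -/
noncomputable def N2 {n : ℕ} (a b : Fin n → ℕ) : ℕ :=
  Nat.card {M : Fin n → Fin n → Bool //
    (∀ i, M i i = false) ∧ (∀ i, rowSum M i = b i) ∧ (∀ j, colSum M j = a j)}

def Digraphic {n : ℕ} (a b : Fin n → ℕ) : Prop := 0 < N2 a b

/-- Number of simple graph realizations of `a` (symmetric 0-1 adjacency matrices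
with zero diagonal and degrees `a`). -/
noncomputable def N3 {n : ℕ} (a : Fin n → ℕ) : ℕ :=
  Nat.card {M : Fin n → Fin n → Bool //
    (∀ i j, M i j = M j i) ∧ (∀ i, M i i = false) ∧ (∀ i, rowSum M i = a i)}

def Graphic {n : ℕ} (a : Fin n → ℕ) : Prop := 0 < N3 a

/-- The minconvex list for parameters `n, m`. -/
def minconvex (n m : ℕ) : Fin n → ℕ :=
  fun i => if (i : ℕ) < m % n then m / n + 1 else m / n

/-- `(a,b)` is lexicographically nonincreasing. -/
def LexNonincreasing {n : ℕ} (a b : Fin n → ℕ) : Prop :=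
  ∀ i j : Fin n, i ≤ j → (a j < a i ∨ (a i = a j ∧ b j ≤ b i))


lemma sum_eq_of_eq_off {n : ℕ} (f g : Fin n → ℕ) (k : Fin n)
    (h : ∀ y, y ≠ k → f y = g y) : (∑ y, f y) + g k = (∑ y, g y) + f k := by
  rw [← Finset.add_sum_erase _ f (mem_univ k), ← Finset.add_sum_erase _ g (mem_univ k)]
  have : ∑ y ∈ univ.erase k, f y = ∑ y ∈ univ.erase k, g y :=
    Finset.sum_congr rfl fun y hy => h y (Finset.mem_erase.mp hy).1
  omega

lemma sum_eq_of_eq_off2 {n : ℕ} (f g : Fin n → ℕ) (p q : Fin n) (hpq : p ≠ q)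
    (h : ∀ y, y ≠ p → y ≠ q → f y = g y) :
    (∑ y, f y) + g p + g q = (∑ y, g y) + f p + f q := by
  rw [← Finset.add_sum_erase _ f (mem_univ p), ← Finset.add_sum_erase _ g (mem_univ p),
    ← Finset.add_sum_erase _ f (Finset.mem_erase.mpr ⟨Ne.symm hpq, mem_univ q⟩),
    ← Finset.add_sum_erase _ g (Finset.mem_erase.mpr ⟨Ne.symm hpq, mem_univ q⟩)]
  have : ∑ y ∈ (univ.erase p).erase q, f y = ∑ y ∈ (univ.erase p).erase q, g y := by
    refine Finset.sum_congr rfl fun y hy => ?_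
    have hy' := Finset.mem_erase.mp hy
    exact h y (Finset.mem_erase.mp hy'.2).1 hy'.1
  omega

lemma graphic_iff {n : ℕ} (a : Fin n → ℕ) : Graphic a ↔
    ∃ M : Fin n → Fin n → Bool,
      (∀ i j, M i j = M j i) ∧ (∀ i, M i i = false) ∧ (∀ i, rowSum M i = a i) := by
  unfold Graphic N3
  rw [Nat.card_pos_iff]
  constructor
  · intro h; exact nonempty_subtype.mp h.1
  · intro h; exact ⟨nonempty_subtype.mpr h, inferInstance⟩

lemma partSum_update {n : ℕ} (f : Fin n → ℕ) (i : Fin n) (b k : ℕ) :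
    partSum (Function.update f i b) k + (if (i : ℕ) < k then f i else 0)
      = partSum f k + (if (i : ℕ) < k then b else 0) := by
  unfold partSum
  rw [← Finset.add_sum_erase _ (fun (t : Fin n) => if (t : ℕ) < k then Function.update f i b t else 0) (mem_univ i),
    ← Finset.add_sum_erase _ (fun (t : Fin n) => if (t : ℕ) < k then f t else 0) (mem_univ i)]
  have : ∑ t ∈ univ.erase i, (if (t : ℕ) < k then Function.update f i b t else 0)
      = ∑ t ∈ univ.erase i, (if (t : ℕ) < k then f t else 0) := by
    refine Finset.sum_congr rfl fun t ht => ?_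
    rw [Function.update_of_ne (Finset.mem_erase.mp ht).1]
  rw [this, Function.update_self]
  split_ifs <;> omega

lemma partSum_top {n : ℕ} (f : Fin n → ℕ) : partSum f n = ∑ i, f i := by
  unfold partSum
  exact Finset.sum_congr rfl fun t _ => by simp [t.is_lt]

def switchM {n : ℕ} (M : Fin n → Fin n → Bool) (i j k : Fin n) : Fin n → Fin n → Bool :=
  fun x y => if (x = i ∧ y = k) ∨ (x = k ∧ y = i) then false
    else if (x = j ∧ y = k) ∨ (x = k ∧ y = j) then true else M x y

lemma transfer_graphic {n : ℕ} {a' a : Fin n → ℕ} {i j : Fin n}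
    (h : UnitTransfer a' a i j) (hg : Graphic a') : Graphic a := by
  obtain ⟨hij, hdeg, ha⟩ := h
  rw [graphic_iff] at hg ⊢
  obtain ⟨M, hsym, hdiag, hrow⟩ := hg
  have hij' : i ≠ j := ne_of_lt hij
  have hcard : ∀ x, (univ.filter (fun y => M x y = true)).card = rowSum M x := by
    intro x; rw [Finset.card_filter]; unfold rowSum
    exact Finset.sum_congr rfl fun y _ => by by_cases h : M x y <;> simp [h]
  have hST : ¬ (univ.filter (fun y => M i y = true ∧ y ≠ j)) ⊆
      (univ.filter (fun y => M j y = true)) := by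
    intro hsub
    have h1 := Finset.card_le_card hsub
    have h2 : (univ.filter (fun y => M i y = true)) ⊆
        insert j (univ.filter (fun y => M i y = true ∧ y ≠ j)) := by
      intro y hy
      simp only [mem_filter, mem_univ, true_and] at hy
      by_cases hyj : y = j
      · simp [hyj]
      · simp [hyj, hy]
    have h3 := Finset.card_le_card h2
    have h4 := Finset.card_insert_le j (univ.filter (fun y => M i y = true ∧ y ≠ j))
    rw [hcard, hrow] at h3
    rw [hcard, hrow] at h1
    omega
  obtain ⟨k, hkS, hkT⟩ := Finset.not_subset.mp hST
  simp only [mem_filter, mem_univ, true_and] at hkS hkT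
  obtain ⟨hMik, hkj⟩ := hkS
  have hMjk : M j k = false := by
    cases hMN : M j k
    · rfl
    · exact absurd hMN hkT
  have hki : k ≠ i := by
    intro hh; rw [hh] at hMik; rw [hdiag i] at hMik; exact Bool.false_ne_true hMik
  have hM'iy : ∀ y, y ≠ k → switchM M i j k i y = M i y := by
    intro y hy
    have c1 : ¬((i = i ∧ y = k) ∨ (i = k ∧ y = i)) := by
      rintro (⟨_, rfl⟩ | ⟨hc, _⟩) <;> [exact hy rfl; exact hki hc.symm]
    have c2 : ¬((i = j ∧ y = k) ∨ (i = k ∧ y = j)) := by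
      rintro (⟨hc, _⟩ | ⟨hc, _⟩) <;> [exact hij' hc; exact hki hc.symm]
    unfold switchM
    rw [if_neg c1, if_neg c2]
  have hM'ik : switchM M i j k i k = false := by
    unfold switchM
    rw [if_pos (Or.inl ⟨rfl, rfl⟩)]
  have hM'jy : ∀ y, y ≠ k → switchM M i j k j y = M j y := by
    intro y hy
    have c1 : ¬((j = i ∧ y = k) ∨ (j = k ∧ y = i)) := by
      rintro (⟨hc, _⟩ | ⟨hc, _⟩) <;> [exact hij' hc.symm; exact hkj hc.symm]
    have c2 : ¬((j = j ∧ y = k) ∨ (j = k ∧ y = j)) := by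
      rintro (⟨_, rfl⟩ | ⟨hc, _⟩) <;> [exact hy rfl; exact hkj hc.symm]
    unfold switchM
    rw [if_neg c1, if_neg c2]
  have hM'jk : switchM M i j k j k = true := by
    have c1 : ¬((j = i ∧ k = k) ∨ (j = k ∧ k = i)) := by
      rintro (⟨hc, _⟩ | ⟨hc, _⟩) <;> [exact hij' hc.symm; exact hkj hc.symm]
    unfold switchM
    rw [if_neg c1, if_pos (Or.inl ⟨rfl, rfl⟩)]
  have hM'ky : ∀ y, y ≠ i → y ≠ j → switchM M i j k k y = M k y := by
    intro y hyi hyj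
    have c1 : ¬((k = i ∧ y = k) ∨ (k = k ∧ y = i)) := by
      rintro (⟨hc, _⟩ | ⟨_, hc⟩) <;> [exact hki hc; exact hyi hc]
    have c2 : ¬((k = j ∧ y = k) ∨ (k = k ∧ y = j)) := by
      rintro (⟨hc, _⟩ | ⟨_, hc⟩) <;> [exact hkj hc; exact hyj hc]
    unfold switchM
    rw [if_neg c1, if_neg c2]
  have hM'ki : switchM M i j k k i = false := by
    unfold switchM
    rw [if_pos (Or.inr ⟨rfl, rfl⟩)]
  have hM'kj : switchM M i j k k j = true := by
    have c1 : ¬((k = i ∧ j = k) ∨ (k = k ∧ j = i)) := by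
      rintro (⟨hc, _⟩ | ⟨_, hc⟩) <;> [exact hki hc; exact hij' hc.symm]
    unfold switchM
    rw [if_neg c1, if_pos (Or.inr ⟨rfl, rfl⟩)]
  have hM'xy : ∀ x y, x ≠ i → x ≠ j → x ≠ k → switchM M i j k x y = M x y := by
    intro x y hxi hxj hxk
    have c1 : ¬((x = i ∧ y = k) ∨ (x = k ∧ y = i)) := by
      rintro (⟨hc, _⟩ | ⟨hc, _⟩) <;> [exact hxi hc; exact hxk hc]
    have c2 : ¬((x = j ∧ y = k) ∨ (x = k ∧ y = j)) := by
      rintro (⟨hc, _⟩ | ⟨hc, _⟩) <;> [exact hxj hc; exact hxk hc]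
    unfold switchM
    rw [if_neg c1, if_neg c2]
  refine ⟨switchM M i j k, ?_, ?_, ?_⟩
  · intro x y
    unfold switchM
    have e1 : ((x = i ∧ y = k) ∨ (x = k ∧ y = i)) ↔ ((y = i ∧ x = k) ∨ (y = k ∧ x = i)) := by
      tauto
    have e2 : ((x = j ∧ y = k) ∨ (x = k ∧ y = j)) ↔ ((y = j ∧ x = k) ∨ (y = k ∧ x = j)) := by
      tauto
    by_cases h1 : (x = i ∧ y = k) ∨ (x = k ∧ y = i)
    · rw [if_pos h1, if_pos (e1.mp h1)]
    · rw [if_neg h1, if_neg (fun hc => h1 (e1.mpr hc))]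
      by_cases h2 : (x = j ∧ y = k) ∨ (x = k ∧ y = j)
      · rw [if_pos h2, if_pos (e2.mp h2)]
      · rw [if_neg h2, if_neg (fun hc => h2 (e2.mpr hc))]
        exact hsym x y
  · intro x
    have c1 : ¬((x = i ∧ x = k) ∨ (x = k ∧ x = i)) := by
      rintro (⟨rfl, rfl⟩ | ⟨rfl, rfl⟩) <;> exact hki rfl
    have c2 : ¬((x = j ∧ x = k) ∨ (x = k ∧ x = j)) := by
      rintro (⟨rfl, rfl⟩ | ⟨rfl, rfl⟩) <;> exact hkj rfl
    unfold switchM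
    rw [if_neg c1, if_neg c2]
    exact hdiag x
  · intro x
    have hupd : ∀ x : Fin n, x ≠ i → x ≠ j →
        Function.update (Function.update a' i (a' i - 1)) j (a' j + 1) x = a' x := by
      intro x hxi hxj
      rw [Function.update_of_ne hxj, Function.update_of_ne hxi]
    rcases eq_or_ne x i with rfl | hxi
    · have hsum := sum_eq_of_eq_off (fun y => if switchM M x j k x y then 1 else 0)
        (fun y => if M x y then 1 else 0) k (fun y hy => by rw [hM'iy y hy])
      simp only [hMik, hM'ik] at hsum
      have hr : rowSum (switchM M x j k) x + 1 = a' x := by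
        rw [← hrow x]; unfold rowSum; simp at hsum ⊢; omega
      rw [ha, Function.update_of_ne hij', Function.update_self]
      omega
    rcases eq_or_ne x j with rfl | hxj
    · have hsum := sum_eq_of_eq_off (fun y => if switchM M i x k x y then 1 else 0)
        (fun y => if M x y then 1 else 0) k (fun y hy => by rw [hM'jy y hy])
      simp only [hMjk, hM'jk] at hsum
      have hr : rowSum (switchM M i x k) x = a' x + 1 := by
        rw [← hrow x]; unfold rowSum; simp at hsum ⊢; omega
      rw [ha, Function.update_self]
      omega
    rcases eq_or_ne x k with rfl | hxk
    · have hMki : M x i = true := by rw [hsym]; exact hMik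
      have hMkj : M x j = false := by rw [hsym]; exact hMjk
      have hsum := sum_eq_of_eq_off2 (fun y => if switchM M i j x x y then 1 else 0)
        (fun y => if M x y then 1 else 0) i j hij'
        (fun y hyi hyj => by rw [hM'ky y hyi hyj])
      simp only [hMki, hMkj, hM'ki, hM'kj] at hsum
      have hr : rowSum (switchM M i j x) x = a' x := by
        rw [← hrow x]; unfold rowSum; simp at hsum ⊢; omega
      rw [ha, hupd x hki hkj]
      exact hr
    · have hr : rowSum (switchM M i j k) x = rowSum M x := by
        unfold rowSum
        exact Finset.sum_congr rfl fun y _ => by rw [hM'xy x y hxi hxj hxk]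
      rw [ha, hupd x hxi hxj, hr, hrow]

lemma main_step {n : ℕ} : ∀ N (a a' : Fin n → ℕ),
    (∑ k ∈ Finset.range (n+1), partSum a' k) ≤ N →
    Nonincreasing a → Graphic a' → Majorized a a' → Graphic a := by
  intro N
  induction N using Nat.strong_induction_on with
  | _ N IH =>
    intro a a' hN hmono hg hmaj
    by_cases heq : ∀ t, a t = a' t
    · have : a = a' := funext heq
      rwa [this]
    -- find i, the least index where a and a' differ
    push_neg at heq
    have hSne : (univ.filter (fun t => a t ≠ a' t)).Nonempty := by
      obtain ⟨t, ht⟩ := heq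
      exact ⟨t, by simp [ht]⟩
    set i := (univ.filter (fun t => a t ≠ a' t)).min' hSne with hi
    have hine : a i ≠ a' i := by
      have := Finset.min'_mem (univ.filter (fun t => a t ≠ a' t)) hSne
      simpa using this
    have hmin : ∀ t, t < i → a t = a' t := by
      intro t ht
      by_contra hne
      have : i ≤ t := Finset.min'_le _ t (by simp [hne])
      exact absurd (lt_of_lt_of_le ht this) (lt_irrefl t)
    -- a i < a' i
    have hlt : a i < a' i := by
      have key := sum_eq_of_eq_off
        (fun t : Fin n => if (t : ℕ) < (i : ℕ) + 1 then a t else 0)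
        (fun t : Fin n => if (t : ℕ) < (i : ℕ) + 1 then a' t else 0) i
        (by
          intro t ht
          by_cases h : (t : ℕ) < (i : ℕ) + 1
          · have : t < i := by
              rcases lt_or_ge t i with h' | h'
              · exact h'
              · exfalso
                have : (i : ℕ) ≤ (t : ℕ) := h'
                have : (t : ℕ) = (i : ℕ) := by omega
                exact ht (Fin.ext this)
            rw [hmin t this]
          · simp [h])
      simp only [lt_add_iff_pos_right, Nat.lt_irrefl, if_pos (Nat.lt_succ_self _)] at key
      have h1 := hmaj.1 ((i : ℕ) + 1)
      unfold partSum at h1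
      omega
    -- find j, the least index after i where a' < a
    have hTne : (univ.filter (fun t => i < t ∧ a' t < a t)).Nonempty := by
      by_contra hT
      rw [Finset.not_nonempty_iff_eq_empty] at hT
      have hle : ∀ t : Fin n, a t ≤ a' t := by
        intro t
        rcases lt_trichotomy t i with h | h | h
        · exact le_of_eq (hmin t h)
        · rw [h]; exact le_of_lt hlt
        · by_contra hc
          have : t ∈ univ.filter (fun t => i < t ∧ a' t < a t) := by
            simp; exact ⟨h, by omega⟩
          rw [hT] at this
          exact absurd this (Finset.notMem_empty t)
      have : ∑ t, a t < ∑ t, a' t :=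
        Finset.sum_lt_sum (fun t _ => hle t) ⟨i, mem_univ i, hlt⟩
      have h2 := hmaj.2
      omega
    set j := (univ.filter (fun t => i < t ∧ a' t < a t)).min' hTne with hj
    have hjmem := (Finset.mem_filter.mp
      (Finset.min'_mem (univ.filter (fun t => i < t ∧ a' t < a t)) hTne)).2
    rw [← hj] at hjmem
    obtain ⟨hij, hjlt⟩ := hjmem
    have hbetween : ∀ t, i < t → t < j → a t ≤ a' t := by
      intro t ht1 ht2
      by_contra hc
      have : j ≤ t := Finset.min'_le _ t (by simp; exact ⟨ht1, by omega⟩)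
      exact absurd (lt_of_lt_of_le ht2 this) (lt_irrefl t)
    have hnat : (i : ℕ) < (j : ℕ) := hij
    have ha'ij : a' j + 2 ≤ a' i := by
      have := hmono i j (le_of_lt hij)
      omega
    have hstrict : ∀ k : ℕ, (i : ℕ) < k → k ≤ (j : ℕ) → partSum a k + 1 ≤ partSum a' k := by
      intro k hk1 hk2
      have hss : ∑ t : Fin n, (if (t : ℕ) < k then a t else 0)
          < ∑ t : Fin n, (if (t : ℕ) < k then a' t else 0) := by
        apply Finset.sum_lt_sum
        · intro t _
          by_cases h : (t : ℕ) < k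
          · rcases lt_trichotomy t i with h' | h' | h'
            · rw [hmin t h']
            · rw [h']
              simp only [if_pos hk1]
              omega
            · have htj : t < j := by
                have : (t : ℕ) < (j : ℕ) := by omega
                exact this
              simp [h]
              exact hbetween t h' htj
          · simp [h]
        · exact ⟨i, mem_univ i, by simp [hk1]; omega⟩
      unfold partSum
      omega
    set a₂ := Function.update (Function.update a' i (a' i - 1)) j (a' j + 1) with ha₂
    have hg2 : Graphic a₂ := transfer_graphic ⟨hij, ha'ij, ha₂⟩ hg
    have hps : ∀ k : ℕ, partSum a₂ k + (if (i : ℕ) < k then 1 else 0)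
        = partSum a' k + (if (j : ℕ) < k then 1 else 0) := by
      intro k
      have h1 := partSum_update (Function.update a' i (a' i - 1)) j (a' j + 1) k
      have h2 := partSum_update a' i (a' i - 1) k
      rw [Function.update_of_ne (ne_of_gt hij)] at h1
      rw [← ha₂] at h1
      split_ifs at h1 h2 ⊢ <;> omega
    have hsum2 : ∑ t, a₂ t = ∑ t, a' t := by
      have hp := hps n
      rw [partSum_top, partSum_top] at hp
      have hi' := i.is_lt
      have hj' := j.is_lt
      split_ifs at hp <;> omega
    have hmaj2 : Majorized a a₂ := by
      constructor
      · intro k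
        have hp := hps k
        have hm := hmaj.1 k
        rcases le_or_gt k (j : ℕ) with hk | hk
        · rcases le_or_gt k (i : ℕ) with hk2 | hk2
          · split_ifs at hp <;> omega
          · have hs := hstrict k hk2 hk
            split_ifs at hp <;> omega
        · split_ifs at hp <;> omega
      · rw [hsum2]; exact hmaj.2
    have hdec : ∑ k ∈ Finset.range (n+1), partSum a₂ k
        < ∑ k ∈ Finset.range (n+1), partSum a' k := by
      apply Finset.sum_lt_sum
      · intro k _
        have hp := hps k
        split_ifs at hp <;> omega
      · refine ⟨(j : ℕ), Finset.mem_range.mpr (by have := j.is_lt; omega), ?_⟩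
        have hp := hps (j : ℕ)
        split_ifs at hp <;> omega
    exact IH (∑ k ∈ Finset.range (n+1), partSum a₂ k) (lt_of_lt_of_le hdec hN) a a₂
      le_rfl hmono hg2 hmaj2

theorem stmt2 {n : ℕ} (a a' : Fin n → ℕ)
    (hmono : Nonincreasing a) (hg : Graphic a') (hmaj : Majorized a a') :
    Graphic a := by
  exact main_step (∑ k ∈ Finset.range (n+1), partSum a' k) a a' le_rfl hmono hg hmaj
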